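/- arXiv:0809.2501 — 6 statements merged into one kernel-verified Lean document; each statement's English description precedes it below -/
import Mathlib

section
/- For 0 < q < 1 and a natural number r ≥ 1, ∑_{k=1}^∞ k q^k/(1-q^k) − ∑_{k=1}^∞ k q^{rk}/(1-q^k) = ∑_{i=1}^{r-1} q^i/(1-q^i)². -/
lemma aux_pow_lt_one (q : ℝ) (hq : 0 < q) (hq1 : q < 1) (n : ℕ) : q ^ (n + 1) < 1 :=
  pow_lt_one₀ hq.le hq1 (Nat.succ_ne_zero n)

lemma aux_hasSum (x : ℝ) (hx : |x| < 1) :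
    HasSum (fun k : ℕ => (k + 1 : ℝ) * x ^ (k + 1)) (x / (1 - x) ^ 2) := by
  have h := hasSum_coe_mul_geometric_of_norm_lt_one (r := x) (by simpa using hx)
  have h0 : HasSum (fun n : ℕ => (↑(n + 1) : ℝ) * x ^ (n + 1))
      (x / (1 - x) ^ 2 - ∑ i ∈ Finset.range 1, (i : ℝ) * x ^ i) :=
    (hasSum_nat_add_iff' 1).mpr h
  simpa using h0

lemma aux_summable (q : ℝ) (hq : 0 < q) (hq1 : q < 1) (r : ℕ) (hr : 1 ≤ r) :
    Summable (fun k : ℕ => (k + 1 : ℝ) * q ^ (r * (k + 1)) / (1 - q ^ (k + 1))) := by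
  have hs : Summable (fun k : ℕ => (k + 1 : ℝ) * q ^ (k + 1) * (1 - q)⁻¹) :=
    ((aux_hasSum q (by rw [abs_of_pos hq]; exact hq1)).summable).mul_right _
  have h2 : (0:ℝ) < 1 - q := by linarith
  apply hs.of_nonneg_of_le
  · intro k
    have h1 : (0:ℝ) < 1 - q ^ (k + 1) := by linarith [aux_pow_lt_one q hq hq1 k]
    positivity
  · intro k
    have h1 : (0:ℝ) < 1 - q ^ (k + 1) := by linarith [aux_pow_lt_one q hq hq1 k]
    have h3 : q ^ (r * (k + 1)) ≤ q ^ (k + 1) :=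
      pow_le_pow_of_le_one hq.le hq1.le (Nat.le_mul_of_pos_left _ hr)
    rw [div_le_iff₀ h1]
    have h4 : (1 - q) ≤ 1 - q ^ (k + 1) := by
      have : q ^ (k+1) ≤ q := by
        calc q ^ (k+1) ≤ q ^ 1 := pow_le_pow_of_le_one hq.le hq1.le (by omega)
        _ = q := pow_one q
      linarith
    calc (k + 1 : ℝ) * q ^ (r * (k + 1)) ≤ (k + 1 : ℝ) * q ^ (k + 1) := by
          apply mul_le_mul_of_nonneg_left h3; positivity
      _ = (k + 1 : ℝ) * q ^ (k + 1) * (1 - q)⁻¹ * (1 - q) := by field_simp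
      _ ≤ (k + 1 : ℝ) * q ^ (k + 1) * (1 - q)⁻¹ * (1 - q ^ (k + 1)) := by
          apply mul_le_mul_of_nonneg_left h4; positivity

lemma aux_step (q : ℝ) (hq : 0 < q) (hq1 : q < 1) (r : ℕ) (hr : 1 ≤ r) :
    (∑' k : ℕ, (k + 1 : ℝ) * q ^ (r * (k + 1)) / (1 - q ^ (k + 1))) -
      (∑' k : ℕ, (k + 1 : ℝ) * q ^ ((r + 1) * (k + 1)) / (1 - q ^ (k + 1))) =
      q ^ r / (1 - q ^ r) ^ 2 := by
  have h1 := aux_summable q hq hq1 r hr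
  have h2 := aux_summable q hq hq1 (r + 1) (by omega)
  rw [← Summable.tsum_sub h1 h2]
  have hqr : |q ^ r| < 1 := by
    rw [abs_of_pos (pow_pos hq r)]; exact pow_lt_one₀ hq.le hq1 (by omega)
  have key : ∀ k : ℕ, (k + 1 : ℝ) * q ^ (r * (k + 1)) / (1 - q ^ (k + 1)) -
      (k + 1 : ℝ) * q ^ ((r + 1) * (k + 1)) / (1 - q ^ (k + 1)) =
      (k + 1 : ℝ) * (q ^ r) ^ (k + 1) := by
    intro k
    have h1 : (1:ℝ) - q ^ (k + 1) ≠ 0 := by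
      have := aux_pow_lt_one q hq hq1 k; linarith
    have e : q ^ ((r + 1) * (k + 1)) = q ^ (r * (k + 1)) * q ^ (k + 1) := by
      rw [← pow_add]; ring_nf
    have e2 : (q ^ r) ^ (k + 1) = q ^ (r * (k + 1)) := by rw [← pow_mul]
    field_simp [e, e2]
    ring
  calc (∑' k : ℕ, ((k + 1 : ℝ) * q ^ (r * (k + 1)) / (1 - q ^ (k + 1)) -
      (k + 1 : ℝ) * q ^ ((r + 1) * (k + 1)) / (1 - q ^ (k + 1))))
      = ∑' k : ℕ, (k + 1 : ℝ) * (q ^ r) ^ (k + 1) := tsum_congr key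
    _ = q ^ r / (1 - q ^ r) ^ 2 := (aux_hasSum (q ^ r) hqr).tsum_eq

theorem zetaq_shift (q : ℝ) (hq : 0 < q) (hq1 : q < 1) (r : ℕ) (hr : 1 ≤ r) :
    (∑' k : ℕ, (k + 1 : ℝ) * q ^ (k + 1) / (1 - q ^ (k + 1))) -
      (∑' k : ℕ, (k + 1 : ℝ) * q ^ (r * (k + 1)) / (1 - q ^ (k + 1))) =
      ∑ i ∈ Finset.Icc 1 (r - 1), q ^ i / (1 - q ^ i) ^ 2 := by
  induction r with
  | zero => omega
  | succ n ih =>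
    rcases Nat.eq_or_lt_of_le hr with h | h
    · simp [← h, one_mul]
    · have hn : 1 ≤ n := by omega
      have step := aux_step q hq hq1 n hn
      have ihn := ih hn
      have : Finset.Icc 1 (n + 1 - 1) = insert n (Finset.Icc 1 (n - 1)) := by
        rw [Nat.add_sub_cancel]
        have : Finset.Icc 1 n = Finset.Icc 1 (n-1) ∪ {n} := by
          ext x; simp [Finset.mem_Icc]; omega
        rw [this, Finset.union_comm]
        rfl
      rw [this, Finset.sum_insert (by simp [Finset.mem_Icc]; omega)]
      linarith
end

section
/- For 0 < q < 1, the little q-Legendre polynomial P_n(x;1,1|q) = ∑_{k=0}^n (q^{-n};q)_k (q^{n+1};q)_k / ((q;q)_k)² · q^k x^k satisfies the orthogonality relations ∑_{k=0}^∞ q^k P_n(q^k;1,1|q) q^{km} = 0 for all m = 0, 1, ..., n−1. -/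
/-- The q-Pochhammer symbol `(a;q)_n = ∏_{j=0}^{n-1} (1 - a q^j)`. -/
noncomputable def qPoch (a q : ℝ) (n : ℕ) : ℝ := ∏ j ∈ Finset.range n, (1 - a * q ^ j)

/-- The little q-Legendre polynomial `P_n(x;1,1|q)`. -/
noncomputable def littleQLegendre (q : ℝ) (n : ℕ) (x : ℝ) : ℝ :=
  ∑ k ∈ Finset.range (n + 1),
    qPoch (q ^ (-(n : ℤ))) q k * qPoch (q ^ (n + 1)) q k / (qPoch q q k) ^ 2 * q ^ k * x ^ k

set_option maxHeartbeats 1000000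

noncomputable def qA (q : ℝ) (n j : ℕ) : ℝ :=
  qPoch ((q ^ n)⁻¹) q j * qPoch (q ^ (n + 1)) q j / (qPoch q q j) ^ 2 * q ^ j

lemma qPoch_succ (a q : ℝ) (j : ℕ) : qPoch a q (j + 1) = qPoch a q j * (1 - a * q ^ j) :=
  Finset.prod_range_succ _ _

/-- The WZ-style certificate identity. -/
lemma cert (a b u X N Q : ℝ) (hX : X ≠ 0) (hQ : Q ≠ 0) (hN : N ≠ 0)
    (h1 : 1 - Q * X ≠ 0) (h2 : 1 - u * X ≠ 0) (h3 : 1 - u * (X * Q) ≠ 0)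
    (hb : b * N * (1 - Q * X) ^ 2 = a * Q * (N - X) * (1 - N * Q * X)) :
    (N - u) * (1 - u * (N * Q)) * (a * (1 - u * Q * X)⁻¹)
        - N * (1 - u) ^ 2 * (a * (1 - u * X)⁻¹)
      = N * u * (1 - X * Q) ^ 2 * b * (X * Q * (1 - u * (X * Q)))⁻¹
        - N * u * (1 - X) ^ 2 * a * (X * (1 - u * X))⁻¹ := by
  have hb' : b = a * Q * (N - X) * (1 - N * Q * X) / (N * (1 - Q * X) ^ 2) := by
    rw [eq_div_iff (mul_ne_zero hN (pow_ne_zero 2 h1))]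
    linear_combination hb
  have h1' : 1 - X * Q ≠ 0 := by rwa [mul_comm]
  have h3' : (1 : ℝ) - u * Q * X ≠ 0 := by
    have h : u * Q * X = u * (X * Q) := by ring
    rw [h]; exact h3
  rw [hb']
  field_simp
  ring

section aux
variable {q : ℝ} (hq : 0 < q) (hq1 : q < 1)
include hq hq1

lemma one_sub_pow_pos (k : ℕ) (hk : k ≠ 0) : 0 < 1 - q ^ k :=
  sub_pos.2 (pow_lt_one₀ hq.le hq1 hk)

lemma qPoch_q_ne (j : ℕ) : qPoch q q j ≠ 0 := by
  unfold qPoch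
  apply Finset.prod_ne_zero_iff.2
  intro i _
  have h : q * q ^ i = q ^ (i + 1) := by ring
  rw [h]
  exact ne_of_gt (one_sub_pow_pos hq hq1 (i + 1) (Nat.succ_ne_zero i))

lemma qA_succ (n j : ℕ) :
    qA q n (j + 1) * q ^ n * (1 - q * q ^ j) ^ 2
      = qA q n j * q * (q ^ n - q ^ j) * (1 - q ^ (n + 1) * q ^ j) := by
  have hR : qPoch q q j ≠ 0 := qPoch_q_ne hq hq1 j
  have hqn : (q : ℝ) ^ n ≠ 0 := by positivity
  have hqX : (1 : ℝ) - q * q ^ j ≠ 0 := by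
    have h : q * q ^ j = q ^ (j + 1) := by ring
    rw [h]; exact ne_of_gt (one_sub_pow_pos hq hq1 (j + 1) (Nat.succ_ne_zero j))
  unfold qA
  rw [qPoch_succ, qPoch_succ, qPoch_succ]
  have hp : (q : ℝ) ^ (n + 1) = q ^ n * q := pow_succ q n
  rw [hp]
  field_simp
  ring_nf
  field_simp
  ring

omit hq1 in
lemma qA_top (n : ℕ) : qA q n (n + 1) = 0 := by
  have hqn : (q : ℝ) ^ n ≠ 0 := by positivity
  have hz : qPoch ((q ^ n)⁻¹) q (n + 1) = 0 := by
    unfold qPoch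
    refine Finset.prod_eq_zero (Finset.self_mem_range_succ n) ?_
    field_simp
    norm_num
  unfold qA
  rw [hz]
  ring

lemma qkey (n : ℕ) (u : ℝ) (hu : ∀ j : ℕ, 1 - u * q ^ j ≠ 0) :
    q ^ n * (1 - u) ^ 2 * (∑ j ∈ Finset.range (n + 1), qA q n j * (1 - u * q ^ j)⁻¹)
      = (q ^ n - u) * (1 - u * q ^ (n + 1))
        * (∑ j ∈ Finset.range (n + 1), qA q n j * (1 - u * q * q ^ j)⁻¹) := by
  set G : ℕ → ℝ := fun j =>
    q ^ n * u * (1 - q ^ j) ^ 2 * qA q n j * (q ^ j * (1 - u * q ^ j))⁻¹ with hG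
  have hper : ∀ j ∈ Finset.range (n + 1),
      (q ^ n - u) * (1 - u * q ^ (n + 1)) * (qA q n j * (1 - u * q * q ^ j)⁻¹)
        - q ^ n * (1 - u) ^ 2 * (qA q n j * (1 - u * q ^ j)⁻¹)
        = G (j + 1) - G j := by
    intro j _
    have hX : (q : ℝ) ^ j ≠ 0 := by positivity
    have hqn : (q : ℝ) ^ n ≠ 0 := by positivity
    have hq0 : (q : ℝ) ≠ 0 := ne_of_gt hq
    have h1 : (1 : ℝ) - q * q ^ j ≠ 0 := by
      have h : q * q ^ j = q ^ (j + 1) := by ring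
      rw [h]; exact ne_of_gt (one_sub_pow_pos hq hq1 (j + 1) (Nat.succ_ne_zero j))
    have h1b : (1 : ℝ) - q ^ j * q ≠ 0 := by rwa [mul_comm]
    have h2 : (1 : ℝ) - u * q ^ j ≠ 0 := hu j
    have h3 : (1 : ℝ) - u * (q ^ j * q) ≠ 0 := by
      have h : u * (q ^ j * q) = u * q ^ (j + 1) := by ring
      rw [h]; exact hu (j + 1)
    have hb := qA_succ hq hq1 n j
    rw [pow_succ] at hb
    have hcert := cert (qA q n j) (qA q n (j + 1)) u (q ^ j) (q ^ n) q hX hq0 hqn h1 h2 h3 hb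
    simp only [hG, pow_succ]
    exact hcert
  have htele : ∑ j ∈ Finset.range (n + 1), (G (j + 1) - G j) = G (n + 1) - G 0 :=
    Finset.sum_range_sub G (n + 1)
  have hG0 : G 0 = 0 := by simp [hG]
  have hGtop : G (n + 1) = 0 := by
    simp only [hG, qA_top hq n]
    ring
  have hmain : (q ^ n - u) * (1 - u * q ^ (n + 1))
        * (∑ j ∈ Finset.range (n + 1), qA q n j * (1 - u * q * q ^ j)⁻¹)
      - q ^ n * (1 - u) ^ 2 * (∑ j ∈ Finset.range (n + 1), qA q n j * (1 - u * q ^ j)⁻¹)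
      = 0 := by
    rw [Finset.mul_sum, Finset.mul_sum, ← Finset.sum_sub_distrib]
    rw [Finset.sum_congr rfl hper, htele, hG0, hGtop]
    ring
  linarith [hmain]

lemma qS_vanish (n : ℕ) : ∀ t s : ℕ, s + t = n → 1 ≤ s →
    ∑ j ∈ Finset.range (n + 1), qA q n j * (1 - q ^ s * q ^ j)⁻¹ = 0 := by
  have hu : ∀ s : ℕ, 1 ≤ s → ∀ j : ℕ, (1 : ℝ) - q ^ s * q ^ j ≠ 0 := by
    intro s hs j
    have h : (q : ℝ) ^ s * q ^ j = q ^ (s + j) := (pow_add q s j).symm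
    rw [h]
    exact ne_of_gt (one_sub_pow_pos hq hq1 (s + j) (by omega))
  intro t
  induction t with
  | zero =>
      intro s hsn hs
      have hsn' : s = n := by omega
      subst hsn'
      have hkey := qkey hq hq1 s (q ^ s) (hu s hs)
      rw [sub_self, zero_mul, zero_mul] at hkey
      have h1 : (q : ℝ) ^ s ≠ 0 := by positivity
      have h2 : ((1 : ℝ) - q ^ s) ^ 2 ≠ 0 :=
        pow_ne_zero 2 (ne_of_gt (one_sub_pow_pos hq hq1 s (by omega)))
      rcases mul_eq_zero.1 hkey with h | h
      · exact absurd h (mul_ne_zero h1 h2)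
      · exact h
  | succ t ih =>
      intro s hsn hs
      have hnext : ∑ j ∈ Finset.range (n + 1), qA q n j * (1 - q ^ (s + 1) * q ^ j)⁻¹ = 0 :=
        ih (s + 1) (by omega) (by omega)
      have hkey := qkey hq hq1 n (q ^ s) (hu s hs)
      have hrw : ∀ j : ℕ, (q:ℝ) ^ s * q * q ^ j = q ^ (s + 1) * q ^ j := by
        intro j; ring
      simp only [hrw] at hkey
      rw [hnext, mul_zero] at hkey
      have h1 : (q : ℝ) ^ n ≠ 0 := by positivity
      have h2 : ((1 : ℝ) - q ^ s) ^ 2 ≠ 0 :=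
        pow_ne_zero 2 (ne_of_gt (one_sub_pow_pos hq hq1 s (by omega)))
      rcases mul_eq_zero.1 hkey with h | h
      · exact absurd h (mul_ne_zero h1 h2)
      · exact h

end aux

theorem littleQLegendre_orthogonality (q : ℝ) (hq : 0 < q) (hq1 : q < 1) (n m : ℕ)
    (hm : m < n) :
    ∑' k : ℕ, q ^ k * littleQLegendre q n (q ^ k) * (q ^ k : ℝ) ^ m = 0 := by
  have hzpow : q ^ (-(n : ℤ)) = (q ^ n)⁻¹ := by rw [zpow_neg, zpow_natCast]
  have hL : ∀ x : ℝ, littleQLegendre q n x = ∑ j ∈ Finset.range (n + 1), qA q n j * x ^ j := by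
    intro x
    unfold littleQLegendre qA
    rw [hzpow]
  have hr : ∀ j : ℕ, (0 : ℝ) ≤ q ^ (m + 1) * q ^ j ∧ q ^ (m + 1) * q ^ j < 1 := by
    intro j
    constructor
    · positivity
    · have h : (q : ℝ) ^ (m + 1) * q ^ j = q ^ (m + 1 + j) := (pow_add q (m + 1) j).symm
      rw [h]
      exact pow_lt_one₀ hq.le hq1 (by omega)
  have hf : ∀ k : ℕ, q ^ k * littleQLegendre q n (q ^ k) * (q ^ k : ℝ) ^ m
      = ∑ j ∈ Finset.range (n + 1), qA q n j * (q ^ (m + 1) * q ^ j) ^ k := by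
    intro k
    rw [hL, Finset.mul_sum, Finset.sum_mul]
    refine Finset.sum_congr rfl fun j _ => ?_
    ring
  have hsum : ∀ j ∈ Finset.range (n + 1),
      Summable (fun k : ℕ => qA q n j * (q ^ (m + 1) * q ^ j) ^ k) := by
    intro j _
    exact (summable_geometric_of_lt_one (hr j).1 (hr j).2).mul_left _
  calc ∑' k : ℕ, q ^ k * littleQLegendre q n (q ^ k) * (q ^ k : ℝ) ^ m
      = ∑' k : ℕ, ∑ j ∈ Finset.range (n + 1), qA q n j * (q ^ (m + 1) * q ^ j) ^ k :=
        tsum_congr hf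
    _ = ∑ j ∈ Finset.range (n + 1), ∑' k : ℕ, qA q n j * (q ^ (m + 1) * q ^ j) ^ k :=
        Summable.tsum_finsetSum hsum
    _ = ∑ j ∈ Finset.range (n + 1), qA q n j * (1 - q ^ (m + 1) * q ^ j)⁻¹ := by
        refine Finset.sum_congr rfl fun j _ => ?_
        rw [tsum_mul_left, tsum_geometric_of_lt_one (hr j).1 (hr j).2]
    _ = 0 := qS_vanish hq hq1 n (n - (m + 1)) (m + 1) (by omega) (by omega)
end

section
/- For an integer p ≥ 2, let d_n(p) = ∏_{d=1}^n Φ_d(p) where Φ_d is the d-th cyclotomic polynomial. Then lim_{n→∞} d_n(p)^{1/n²} = p^{3/π²}. -/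
open Filter Topology Real

section aux
open Finset ArithmeticFunction
open scoped ArithmeticFunction.Moebius

theorem swapsum {M : Type*} [AddCommMonoid M] (n : ℕ) (F : ℕ → ℕ → M) :
    ∑ d ∈ Finset.Icc 1 n, ∑ x ∈ d.divisorsAntidiagonal, F x.1 x.2
      = ∑ e ∈ Finset.Icc 1 n, ∑ k ∈ Finset.Icc 1 (n / e), F e k := by
  rw [Finset.sum_sigma', Finset.sum_sigma']
  apply Finset.sum_nbij' (fun x => ⟨x.2.1, x.2.2⟩) (fun y => ⟨y.1 * y.2, (y.1, y.2)⟩)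
  · rintro ⟨d, e, k⟩ h
    simp only [Finset.mem_sigma, Finset.mem_Icc, Nat.mem_divisorsAntidiagonal] at h ⊢
    obtain ⟨⟨h1, h2⟩, h3, h4⟩ := h
    have he : 1 ≤ e := Nat.pos_of_ne_zero (by rintro rfl; omega)
    have hk : 1 ≤ k := Nat.pos_of_ne_zero (by rintro rfl; omega)
    have hek : e * k ≤ n := by omega
    refine ⟨⟨he, le_trans (Nat.le_mul_of_pos_right _ hk) hek⟩, hk, ?_⟩
    exact (Nat.le_div_iff_mul_le he).2 (by rw [mul_comm]; omega)
  · rintro ⟨e, k⟩ h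
    simp only [Finset.mem_sigma, Finset.mem_Icc, Nat.mem_divisorsAntidiagonal] at h ⊢
    obtain ⟨⟨h1, h2⟩, h3, h4⟩ := h
    have := (Nat.le_div_iff_mul_le (by omega)).1 h4
    refine ⟨⟨Nat.one_le_iff_ne_zero.2 (by positivity), by rw [mul_comm] at this; omega⟩, trivial,
      by positivity⟩
  · rintro ⟨d, e, k⟩ h
    simp only [Finset.mem_sigma, Finset.mem_Icc, Nat.mem_divisorsAntidiagonal] at h
    simp [h.2.1]
  · rintro ⟨e, k⟩ h; rfl
  · rintro ⟨d, e, k⟩ h; rfl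

theorem totsum (n : ℕ) :
    (∑ d ∈ Finset.Icc 1 n, (Nat.totient d : ℤ))
      = ∑ e ∈ Finset.Icc 1 n, (μ e : ℤ) * (∑ k ∈ Finset.Icc 1 (n / e), (k : ℤ)) := by
  have hinv : ∀ d > 0, ∑ x ∈ d.divisorsAntidiagonal, (μ x.1 : ℤ) • (x.2 : ℤ) = (Nat.totient d : ℤ) := by
    rw [← ArithmeticFunction.sum_eq_iff_sum_smul_moebius_eq]
    intro m hm
    rw [← Nat.cast_sum]
    exact_mod_cast congrArg (Nat.cast (R := ℤ)) (Nat.sum_totient m)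
  calc (∑ d ∈ Finset.Icc 1 n, (Nat.totient d : ℤ))
      = ∑ d ∈ Finset.Icc 1 n, ∑ x ∈ d.divisorsAntidiagonal, (μ x.1 : ℤ) • (x.2 : ℤ) := by
        apply Finset.sum_congr rfl; intro d hd
        exact (hinv d (by simp only [Finset.mem_Icc] at hd; omega)).symm
    _ = ∑ e ∈ Finset.Icc 1 n, ∑ k ∈ Finset.Icc 1 (n / e), (μ e : ℤ) • (k : ℤ) :=
        swapsum n (fun e k => (μ e : ℤ) • (k : ℤ))
    _ = _ := by simp [Finset.mul_sum]

theorem moebius_summable : Summable (fun e : ℕ => (μ e : ℝ) / (e : ℝ) ^ 2) := by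
  apply Summable.of_abs
  apply Summable.of_nonneg_of_le (fun e => abs_nonneg _) (fun e => ?_)
    (Real.summable_one_div_nat_pow.2 one_lt_two)
  rcases Nat.eq_zero_or_pos e with rfl|he
  · simp
  · rw [abs_div, abs_pow, Nat.abs_cast]
    have h1 : ((0:ℝ)) < (e:ℝ) ^ 2 := by positivity
    gcongr
    exact_mod_cast abs_moebius_le_one (n := e)

theorem moebius_tsum : (∑' e : ℕ, (μ e : ℝ) / (e : ℝ) ^ 2) = 6 / π ^ 2 := by
  have h2 : (1 : ℝ) < (2 : ℂ).re := by norm_num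
  have hz := ArithmeticFunction.LSeries_zeta_mul_Lseries_moebius (s := 2) h2
  rw [ArithmeticFunction.LSeries_zeta_eq_riemannZeta h2, riemannZeta_two] at hz
  have hL : LSeries (fun n => (μ n : ℂ)) 2 = ((∑' e : ℕ, (μ e : ℝ) / (e : ℝ) ^ 2 : ℝ) : ℂ) := by
    rw [Complex.ofReal_tsum]
    unfold LSeries
    congr 1; ext n
    rcases Nat.eq_zero_or_pos n with rfl|hn
    · simp [LSeries.term]
    · rw [LSeries.term_of_ne_zero hn.ne']
      push_cast
      norm_num
  rw [hL] at hz
  have hpi : (π : ℂ) ^ 2 ≠ 0 := by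
    simp [Real.pi_ne_zero]
  have : ((∑' e : ℕ, (μ e : ℝ) / (e : ℝ) ^ 2 : ℝ) : ℂ) = 6 / (π : ℂ) ^ 2 := by
    field_simp at hz ⊢
    linear_combination hz
  exact_mod_cast this


noncomputable def fφ (n e : ℕ) : ℝ :=
  (μ e : ℝ) * ((n / e : ℕ) * ((n / e : ℕ) + 1) / 2) / (n : ℝ) ^ 2

theorem gauss (m : ℕ) : (∑ k ∈ Finset.Icc 1 m, (k : ℝ)) = m * (m + 1) / 2 := by
  induction m with
  | zero => simp
  | succ m ih =>
    rw [Finset.sum_Icc_succ_top (by omega), ih]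
    push_cast; ring

theorem floor_div_tendsto (e : ℕ) (he : 1 ≤ e) :
    Tendsto (fun n : ℕ => ((n / e : ℕ) : ℝ) / (n : ℝ)) atTop (nhds (1 / e)) := by
  have key : ∀ n : ℕ, 1 ≤ n → ((n / e : ℕ) : ℝ) / (n : ℝ)
      = (1 - ((n % e : ℕ) : ℝ) / n) / e := by
    intro n hn
    have h : (e : ℝ) * ((n / e : ℕ) : ℝ) + ((n % e : ℕ) : ℝ) = n := by
      exact_mod_cast congrArg (Nat.cast (R := ℝ)) (Nat.div_add_mod n e)
    have hn' : (n : ℝ) ≠ 0 := by positivity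
    have he' : (e : ℝ) ≠ 0 := by positivity
    field_simp
    linear_combination h
  have hmod : Tendsto (fun n : ℕ => ((n % e : ℕ) : ℝ) / n) atTop (nhds 0) := by
    refine squeeze_zero_norm (fun n => ?_) (tendsto_const_div_atTop_nhds_zero_nat (e : ℝ))
    rcases Nat.eq_zero_or_pos n with rfl|hn
    · simp
    · rw [Real.norm_eq_abs, abs_of_nonneg (by positivity)]
      gcongr
      exact_mod_cast (Nat.mod_lt n he).le
  apply Tendsto.congr' (by filter_upwards [eventually_ge_atTop 1] with n hn; exact (key n hn).symm)
  have : Tendsto (fun n : ℕ => (1 - ((n % e : ℕ) : ℝ) / n) / e) atTop (nhds ((1 - 0) / e)) :=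
    (tendsto_const_nhds.sub hmod).div_const e
  simpa using this

theorem totient_sum_tendsto :
    Tendsto (fun n : ℕ => ((∑ d ∈ Finset.Icc 1 n, (Nat.totient d : ℤ)) : ℝ) / (n : ℝ) ^ 2)
      atTop (nhds (3 / π ^ 2)) := by
  have hsum : Summable (fun e : ℕ => 1 / (e : ℝ) ^ 2) := Real.summable_one_div_nat_pow.2 one_lt_two
  have hlim : ∀ e : ℕ, Tendsto (fun n => fφ n e) atTop (nhds ((μ e : ℝ) / (e : ℝ) ^ 2 / 2)) := by
    intro e
    rcases Nat.eq_zero_or_pos e with rfl|he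
    · simp [fφ]
    · have h1 := floor_div_tendsto e he
      have h2 : Tendsto (fun n : ℕ => (1 : ℝ) / n) atTop (nhds 0) :=
        tendsto_one_div_atTop_nhds_zero_nat
      have key : ∀ n : ℕ, 1 ≤ n → fφ n e
          = (μ e : ℝ) * ((((n / e : ℕ) : ℝ) / n) * ((((n / e : ℕ) : ℝ) / n) + 1 / n)) / 2 := by
        intro n hn
        have hn' : (n : ℝ) ≠ 0 := by positivity
        have haux : (((n / e : ℕ) : ℝ) / n) * ((((n / e : ℕ) : ℝ)) / n + 1 / n)
            = ((n / e : ℕ) : ℝ) * (((n / e : ℕ) : ℝ) + 1) / (n : ℝ) ^ 2 := by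
          rw [← add_div, div_mul_div_comm, ← sq]
        unfold fφ
        rw [haux]
        ring
      apply Tendsto.congr' (by filter_upwards [eventually_ge_atTop 1] with n hn; exact (key n hn).symm)
      have : Tendsto (fun n : ℕ => (μ e : ℝ) * ((((n / e : ℕ) : ℝ) / n) * ((((n / e : ℕ) : ℝ) / n) + 1 / n)) / 2)
          atTop (nhds ((μ e : ℝ) * ((1/e) * (1/e + 0)) / 2)) :=
        (tendsto_const_nhds.mul (h1.mul (h1.add h2))).div_const 2
      have hval2 : (μ e : ℝ) * ((1/(e:ℝ)) * (1/(e:ℝ) + 0)) / 2 = (μ e : ℝ) / (e : ℝ) ^ 2 / 2 := by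
        ring
      rwa [hval2] at this
  have hbound : ∀ n : ℕ, ∀ e : ℕ, ‖fφ n e‖ ≤ 1 / (e : ℝ) ^ 2 := by
    intro n e
    rcases Nat.eq_zero_or_pos e with rfl|he
    · simp [fφ]
    rcases Nat.eq_zero_or_pos n with rfl|hn
    · simp [fφ]
    have hμ : |(μ e : ℝ)| ≤ 1 := by exact_mod_cast abs_moebius_le_one (n := e)
    set m : ℕ := n / e with hm
    have hme : (m : ℝ) * e ≤ n := by exact_mod_cast Nat.div_mul_le_self n e
    have hT : (m : ℝ) * (m + 1) / 2 ≤ (n : ℝ) ^ 2 / (e : ℝ) ^ 2 := by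
      rcases Nat.eq_zero_or_pos m with hm0|hm1
      · rw [hm0]; norm_num; positivity
      · have h1 : (m : ℝ) * (m + 1) / 2 ≤ (m : ℝ) ^ 2 := by
          have : (1 : ℝ) ≤ m := by exact_mod_cast hm1
          nlinarith
        have h2 : (m : ℝ) ^ 2 ≤ (n : ℝ) ^ 2 / (e : ℝ) ^ 2 := by
          rw [le_div_iff₀ (by positivity)]
          calc (m : ℝ) ^ 2 * (e : ℝ) ^ 2 = ((m : ℝ) * e) ^ 2 := by ring
            _ ≤ (n : ℝ) ^ 2 := pow_le_pow_left₀ (by positivity) hme 2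
        linarith
    rw [Real.norm_eq_abs]
    unfold fφ
    rw [abs_div, abs_mul, abs_of_nonneg (a := ((n/e : ℕ) : ℝ) * ((n/e : ℕ) + 1) / 2) (by positivity),
      abs_of_nonneg (a := (n:ℝ)^2) (by positivity)]
    calc |(μ e : ℝ)| * ((m : ℝ) * (m + 1) / 2) / (n : ℝ) ^ 2
        ≤ 1 * ((n : ℝ) ^ 2 / (e : ℝ) ^ 2) / (n : ℝ) ^ 2 := by
          gcongr
      _ = 1 / (e : ℝ) ^ 2 := by field_simp
  have main : Tendsto (fun n : ℕ => ∑' e : ℕ, fφ n e) atTop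
      (nhds (∑' e : ℕ, (μ e : ℝ) / (e : ℝ) ^ 2 / 2)) :=
    tendsto_tsum_of_dominated_convergence hsum hlim (Eventually.of_forall hbound)
  have hval : (∑' e : ℕ, (μ e : ℝ) / (e : ℝ) ^ 2 / 2) = 3 / π ^ 2 := by
    rw [tsum_div_const, moebius_tsum]; ring
  have heq : ∀ᶠ n : ℕ in atTop, (∑' e : ℕ, fφ n e)
      = ((∑ d ∈ Finset.Icc 1 n, (Nat.totient d : ℤ)) : ℝ) / (n : ℝ) ^ 2 := by
    filter_upwards [eventually_ge_atTop 1] with n hn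
    have hzero : ∀ e ∉ Finset.Icc 1 n, fφ n e = 0 := by
      intro e hee
      simp only [Finset.mem_Icc, not_and, not_le] at hee
      rcases Nat.eq_zero_or_pos e with rfl|he
      · simp [fφ]
      · have : n / e = 0 := Nat.div_eq_of_lt (hee he)
        simp [fφ, this]
    rw [tsum_eq_sum hzero]
    have h0 := congrArg (fun z : ℤ => (z : ℝ)) (totsum n)
    push_cast at h0
    push_cast
    rw [h0, Finset.sum_div]
    apply Finset.sum_congr rfl
    intro e _
    rw [gauss]
    unfold fφ
    ring
  rw [← hval]
  exact Filter.Tendsto.congr' heq main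


section logpart
variable (p : ℤ) (hp : 2 ≤ p)

noncomputable def Φ (d : ℕ) : ℝ := (((Polynomial.cyclotomic d ℤ).eval p : ℤ) : ℝ)
noncomputable def gg (d : ℕ) : ℝ := Real.log (Φ p d) - (Nat.totient d : ℝ) * Real.log p
noncomputable def εε (m : ℕ) : ℝ := Real.log ((p : ℝ) ^ m - 1) - (m : ℝ) * Real.log p

theorem Φ_pos (hp : 2 ≤ p) (d : ℕ) : 0 < Φ p d := by
  have : (0 : ℤ) < (Polynomial.cyclotomic d ℤ).eval p :=
    Polynomial.cyclotomic_pos' d (by omega)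
  unfold Φ; exact_mod_cast this

theorem sum_gg (hp : 2 ≤ p) (m : ℕ) (hm : 0 < m) : ∑ e ∈ m.divisors, gg p e = εε p m := by
  have hprod : (∏ e ∈ m.divisors, Φ p e) = (p : ℝ) ^ m - 1 := by
    have := congrArg (Polynomial.eval p) (Polynomial.prod_cyclotomic_eq_X_pow_sub_one hm ℤ)
    rw [Polynomial.eval_prod] at this
    simp only [Polynomial.eval_sub, Polynomial.eval_pow, Polynomial.eval_X,
      Polynomial.eval_one] at this
    have h2 := congrArg (fun z : ℤ => (z : ℝ)) this
    push_cast at h2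
    unfold Φ
    exact h2
  have hlog : ∑ e ∈ m.divisors, Real.log (Φ p e) = Real.log ((p : ℝ) ^ m - 1) := by
    rw [← hprod, Real.log_prod]
    intro e _; exact (Φ_pos p hp e).ne'

  have htot : ∑ e ∈ m.divisors, (Nat.totient e : ℝ) = (m : ℝ) := by
    exact_mod_cast congrArg (Nat.cast (R := ℝ)) (Nat.sum_totient m)
  unfold gg εε
  rw [Finset.sum_sub_distrib, hlog, ← Finset.sum_mul, htot]

theorem εε_bound (hp : 2 ≤ p) (k : ℕ) (hk : 1 ≤ k) : |εε p k| ≤ 2 * (1/2 : ℝ) ^ k := by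
  have hq : (2 : ℝ) ≤ (p : ℝ) := by exact_mod_cast hp
  have hqpos : (0 : ℝ) < (p : ℝ) := by linarith
  have hqk : (2 : ℝ) ^ k ≤ (p : ℝ) ^ k := pow_le_pow_left₀ (by norm_num) hq k
  have h2k : (2 : ℝ) ≤ (2 : ℝ) ^ k := by
    calc (2:ℝ) = 2 ^ 1 := (pow_one 2).symm
    _ ≤ 2 ^ k := pow_le_pow_right₀ (by norm_num) hk
  have hqk2 : (2 : ℝ) ≤ (p : ℝ) ^ k := le_trans h2k hqk
  set t : ℝ := ((p : ℝ) ^ k)⁻¹ with ht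
  have ht0 : 0 < t := by positivity
  have ht2 : t ≤ (1/2 : ℝ) ^ k := by
    rw [ht, one_div, inv_pow]
    exact inv_anti₀ (by norm_num) hqk
  have ht12 : t ≤ 1/2 := by
    rw [ht]
    rw [inv_le_comm₀ (by positivity) (by norm_num)]
    linarith
  have hεeq : εε p k = Real.log (1 - t) := by
    unfold εε
    have : (p : ℝ) ^ k - 1 = (p : ℝ) ^ k * (1 - t) := by
      rw [ht, mul_sub, mul_inv_cancel₀ (by positivity), mul_one]
    rw [this, Real.log_mul (by positivity) (by nlinarith), Real.log_pow]
    push_cast; ring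
  have h1t : (0:ℝ) < 1 - t := by linarith
  have hneg : Real.log (1 - t) ≤ 0 := Real.log_nonpos (by linarith) (by linarith)
  have habs : |εε p k| = - Real.log (1 - t) := by rw [hεeq, abs_of_nonpos hneg]
  have hle : - Real.log (1 - t) ≤ t / (1 - t) := by
    rw [← Real.log_inv]
    have := Real.log_le_sub_one_of_pos (x := (1 - t)⁻¹) (by positivity)
    have heq : (1 - t)⁻¹ - 1 = t / (1 - t) := by field_simp; ring
    linarith [heq ▸ this]
  have hfin : t / (1 - t) ≤ 2 * t := by
    rw [div_le_iff₀ h1t]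
    nlinarith
  rw [habs]
  calc - Real.log (1 - t) ≤ t / (1 - t) := hle
    _ ≤ 2 * t := hfin
    _ ≤ 2 * (1/2) ^ k := by linarith

theorem gg_bound (hp : 2 ≤ p) (d : ℕ) (hd : 1 ≤ d) : |gg p d| ≤ 2 := by
  have hmoeb : ∀ n > 0, ∑ x ∈ n.divisorsAntidiagonal, (μ x.fst : ℤ) • εε p x.snd = gg p n :=
    (ArithmeticFunction.sum_eq_iff_sum_smul_moebius_eq (f := gg p) (g := εε p)).1
      (fun m hm => sum_gg p hp m hm) -- note: zsmul
  rw [← hmoeb d hd]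
  calc |∑ x ∈ d.divisorsAntidiagonal, (μ x.fst : ℤ) • εε p x.snd|
      ≤ ∑ x ∈ d.divisorsAntidiagonal, |(μ x.fst : ℤ) • εε p x.snd| := Finset.abs_sum_le_sum_abs _ _
    _ ≤ ∑ x ∈ d.divisorsAntidiagonal, |εε p x.snd| := by
        apply Finset.sum_le_sum
        intro x hx
        rw [zsmul_eq_mul, abs_mul]
        have h1 : |((μ x.1 : ℤ) : ℝ)| ≤ 1 := by exact_mod_cast abs_moebius_le_one (n := x.1)
        nlinarith [abs_nonneg (εε p x.2), abs_nonneg ((μ x.1 : ℤ) : ℝ)]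
    _ = ∑ k ∈ d.divisors, |εε p k| := by
        rw [← Nat.sum_divisorsAntidiagonal' (f := fun _ k => |εε p k|)]
    _ ≤ ∑ k ∈ Finset.Icc 1 d, |εε p k| := by
        apply Finset.sum_le_sum_of_subset_of_nonneg
        · intro k hk
          simp only [Finset.mem_Icc]
          exact ⟨Nat.pos_of_mem_divisors hk, Nat.divisor_le hk⟩
        · intro k _ _; exact abs_nonneg _
    _ ≤ ∑ k ∈ Finset.Icc 1 d, 2 * (1/2 : ℝ) ^ k := by
        apply Finset.sum_le_sum
        intro k hk
        exact εε_bound p hp k (Finset.mem_Icc.1 hk).1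
    _ ≤ 2 := by
        rw [← Finset.mul_sum]
        have : ∑ k ∈ Finset.Icc 1 d, (1/2 : ℝ) ^ k ≤ 1 := by
          have h1 : ∑ k ∈ Finset.Icc 1 d, (1/2 : ℝ) ^ k
              = ∑ j ∈ Finset.range d, (1/2 : ℝ) ^ (j + 1) := by
            have : Finset.Icc 1 d = Finset.Ico 1 (d + 1) := by
              rw [Finset.Ico_add_one_right_eq_Icc]
            rw [this, Finset.sum_Ico_eq_sum_range]
            simp [add_comm]
          rw [h1]
          have h2 : ∑ j ∈ Finset.range d, (1/2 : ℝ) ^ (j + 1)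
              = (1/2) * ∑ j ∈ Finset.range d, (1/2 : ℝ) ^ j := by
            rw [Finset.mul_sum]
            apply Finset.sum_congr rfl
            intro j _; ring
          rw [h2]
          have := sum_geometric_two_le d
          linarith
        linarith

end logpart

theorem cyclotomic_product_asymptotics (p : ℤ) (hp : 2 ≤ p) :
    Tendsto
      (fun n : ℕ =>
        ((∏ d ∈ Finset.Icc 1 n, (Polynomial.cyclotomic d ℤ).eval p : ℤ) : ℝ) ^
          ((1 : ℝ) / (n : ℝ) ^ 2))
      atTop (nhds ((p : ℝ) ^ ((3 : ℝ) / Real.pi ^ 2))) := by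
  have hq : (2 : ℝ) ≤ (p : ℝ) := by exact_mod_cast hp
  set L : ℕ → ℝ := fun n => (∑ d ∈ Finset.Icc 1 n, Real.log (Φ p d)) * ((1:ℝ) / (n : ℝ) ^ 2)
    with hL
  have hmain : Tendsto L atTop (nhds (Real.log p * (3 / π ^ 2))) := by
    have hsplit : ∀ n : ℕ, L n =
        (((∑ d ∈ Finset.Icc 1 n, (Nat.totient d : ℤ)) : ℝ) / (n : ℝ) ^ 2) * Real.log p
          + (∑ d ∈ Finset.Icc 1 n, gg p d) * ((1:ℝ) / (n : ℝ) ^ 2) := by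
      intro n
      rw [hL]
      simp only [gg]
      rw [Finset.sum_sub_distrib, ← Finset.sum_mul]
      push_cast
      ring
    have h1 : Tendsto (fun n : ℕ =>
        (((∑ d ∈ Finset.Icc 1 n, (Nat.totient d : ℤ)) : ℝ) / (n : ℝ) ^ 2) * Real.log p)
        atTop (nhds ((3 / π ^ 2) * Real.log p)) :=
      totient_sum_tendsto.mul_const _
    have h2 : Tendsto (fun n : ℕ => (∑ d ∈ Finset.Icc 1 n, gg p d) * ((1:ℝ) / (n : ℝ) ^ 2))
        atTop (nhds 0) := by
      apply squeeze_zero_norm (fun n => ?_) (tendsto_const_div_atTop_nhds_zero_nat 2)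
      rcases Nat.eq_zero_or_pos n with rfl|hn
      · simp
      · rw [Real.norm_eq_abs, abs_mul]
        have hb : |∑ d ∈ Finset.Icc 1 n, gg p d| ≤ 2 * (n:ℝ) := by
          calc |∑ d ∈ Finset.Icc 1 n, gg p d| ≤ ∑ d ∈ Finset.Icc 1 n, |gg p d| :=
              Finset.abs_sum_le_sum_abs _ _
            _ ≤ ∑ _d ∈ Finset.Icc 1 n, (2:ℝ) := Finset.sum_le_sum
                (fun d hd => gg_bound p hp d (Finset.mem_Icc.1 hd).1)
            _ = 2 * (n:ℝ) := by rw [Finset.sum_const, Nat.card_Icc]; push_cast; ring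
        have hn' : (0:ℝ) < n := by exact_mod_cast hn
        rw [abs_of_nonneg (by positivity : (0:ℝ) ≤ (1:ℝ)/(n:ℝ)^2)]
        calc |∑ d ∈ Finset.Icc 1 n, gg p d| * ((1:ℝ)/(n:ℝ)^2)
            ≤ (2 * (n:ℝ)) * ((1:ℝ)/(n:ℝ)^2) := by
              apply mul_le_mul_of_nonneg_right hb (by positivity)
          _ = 2 / (n:ℝ) := by field_simp
    have := h1.add h2
    rw [add_zero] at this
    rw [mul_comm (Real.log (p:ℝ)) (3 / π ^ 2)]
    exact this.congr (fun n => (hsplit n).symm)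
  have hexp : Tendsto (fun n => Real.exp (L n)) atTop
      (nhds (Real.exp (Real.log (p:ℝ) * (3 / π ^ 2)))) :=
    (Real.continuous_exp.tendsto _).comp hmain
  have hrhs : Real.exp (Real.log (p:ℝ) * (3 / π ^ 2)) = (p : ℝ) ^ ((3:ℝ) / π ^ 2) :=
    (Real.rpow_def_of_pos (by linarith) _).symm
  rw [← hrhs]
  apply hexp.congr'
  filter_upwards [eventually_ge_atTop 1] with n hn
  have hcast : ((∏ d ∈ Finset.Icc 1 n, (Polynomial.cyclotomic d ℤ).eval p : ℤ) : ℝ)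
      = ∏ d ∈ Finset.Icc 1 n, Φ p d := by
    push_cast [Φ]; rfl
  have hpos : (0:ℝ) < ∏ d ∈ Finset.Icc 1 n, Φ p d :=
    Finset.prod_pos (fun d _ => Φ_pos p hp d)
  show Real.exp ((∑ d ∈ Finset.Icc 1 n, Real.log (Φ p d)) * ((1:ℝ) / (n : ℝ) ^ 2)) = _
  rw [← Real.log_prod (fun d _ => (Φ_pos p hp d).ne')]
  rw [hcast, Real.rpow_def_of_pos hpos]

end aux
end

section
/- As a polynomial identity (equivalently, for every integer p ≥ 2 as integers), lcm{x^j − 1 : 1 ≤ j ≤ n} = ∏_{d=1}^n Φ_d(x), where Φ_d is the d-th cyclotomic polynomial. -/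
open Polynomial Finset

private lemma nat_gcd_lcm_distrib (a b c : ℕ) :
    Nat.gcd (Nat.lcm a b) c = Nat.lcm (Nat.gcd a c) (Nat.gcd b c) := by
  rcases eq_or_ne a 0 with rfl | ha
  · simp only [Nat.lcm_zero_left, Nat.gcd_zero_left]
    exact Nat.dvd_antisymm (Nat.dvd_lcm_left _ _)
      (Nat.lcm_dvd dvd_rfl (Nat.gcd_dvd_right b c))
  rcases eq_or_ne b 0 with rfl | hb
  · simp only [Nat.lcm_zero_right, Nat.gcd_zero_left]
    exact Nat.dvd_antisymm (Nat.dvd_lcm_right _ _)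
      (Nat.lcm_dvd (Nat.gcd_dvd_right a c) dvd_rfl)
  rcases eq_or_ne c 0 with rfl | hc
  · simp
  have hlcm : Nat.lcm a b ≠ 0 := Nat.lcm_ne_zero ha hb
  have hga : Nat.gcd a c ≠ 0 := fun h => ha (Nat.eq_zero_of_gcd_eq_zero_left h)
  have hgb : Nat.gcd b c ≠ 0 := fun h => hb (Nat.eq_zero_of_gcd_eq_zero_left h)
  have hL : Nat.gcd (Nat.lcm a b) c ≠ 0 :=
    fun h => hlcm (Nat.eq_zero_of_gcd_eq_zero_left h)
  have hR : Nat.lcm (Nat.gcd a c) (Nat.gcd b c) ≠ 0 := Nat.lcm_ne_zero hga hgb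
  apply Nat.eq_of_factorization_eq hL hR
  intro q
  rw [Nat.factorization_gcd hlcm hc, Nat.factorization_lcm ha hb,
    Nat.factorization_lcm hga hgb, Nat.factorization_gcd ha hc,
    Nat.factorization_gcd hb hc]
  simp only [Finsupp.inf_apply, Finsupp.sup_apply]
  exact min_max_distrib_right _ _ _

private lemma int_gcd_lcm_distrib (a b c : ℤ) :
    GCDMonoid.gcd (GCDMonoid.lcm a b) c
      = GCDMonoid.lcm (GCDMonoid.gcd a c) (GCDMonoid.gcd b c) := by
  rw [← Int.coe_lcm, ← Int.coe_gcd, ← Int.coe_gcd, ← Int.coe_gcd, ← Int.coe_lcm]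
  norm_cast
  show Nat.gcd (Int.lcm a b) c.natAbs = Nat.lcm (Int.gcd a c) (Int.gcd b c)
  simp only [Int.lcm_def, Int.gcd_def, Int.natAbs_natCast]
  exact nat_gcd_lcm_distrib _ _ _

private lemma finset_gcd_lcm_distrib {β : Type*} (S : Finset β) (f : β → ℤ) (c : ℤ) :
    GCDMonoid.gcd (S.lcm f) c = S.lcm fun j => GCDMonoid.gcd (f j) c := by
  classical
  induction S using Finset.induction with
  | empty => simp
  | insert _ _ h ih => rw [Finset.lcm_insert, Finset.lcm_insert, int_gcd_lcm_distrib, ih]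

private lemma int_finset_lcm_nonneg {β : Type*} (S : Finset β) (f : β → ℤ) :
    0 ≤ S.lcm f := by
  classical
  induction S using Finset.induction with
  | empty => simp
  | insert h ih =>
    rw [Finset.lcm_insert, ← Int.coe_lcm]
    exact Int.natCast_nonneg _

private lemma int_gcd_add_mul (x y z : ℤ) :
    GCDMonoid.gcd x (y + x * z) = GCDMonoid.gcd x y := by
  have h1 : GCDMonoid.gcd x (y + x * z) ∣ GCDMonoid.gcd x y := by
    apply dvd_gcd (gcd_dvd_left _ _)
    have := gcd_dvd_right x (y + x * z)
    have hx := gcd_dvd_left x (y + x * z)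
    have : GCDMonoid.gcd x (y + x * z) ∣ (y + x * z) - x * z :=
      dvd_sub this (hx.mul_right z)
    simpa using this
  have h2 : GCDMonoid.gcd x y ∣ GCDMonoid.gcd x (y + x * z) := by
    apply dvd_gcd (gcd_dvd_left _ _)
    exact dvd_add (gcd_dvd_right x y) ((gcd_dvd_left x y).mul_right z)
  refine Int.dvd_antisymm ?_ ?_ h1 h2 <;>
    · rw [← Int.coe_gcd]; exact Int.natCast_nonneg _

private lemma int_gcd_pow_sub_one (p : ℤ) (hp : 2 ≤ p) :
    ∀ a b : ℕ, GCDMonoid.gcd (p ^ a - 1) (p ^ b - 1) = p ^ Nat.gcd a b - 1 := by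
  intro a
  induction a using Nat.strong_induction_on with
  | _ a ih =>
    intro b
    rcases Nat.eq_zero_or_pos a with rfl | ha
    · rw [pow_zero, sub_self, gcd_zero_left, Nat.gcd_zero_left,
        Int.normalize_of_nonneg]
      have : (1 : ℤ) ≤ p ^ b := one_le_pow₀ (by linarith)
      linarith
    · obtain ⟨e, he⟩ := pow_one_sub_dvd_pow_mul_sub_one p a (b / a)
      have key : p ^ b - 1 = (p ^ (b % a) - 1) + (p ^ a - 1) * (e * p ^ (b % a)) := by
        have hb' : p ^ b = p ^ (a * (b / a)) * p ^ (b % a) := by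
          rw [← pow_add]
          congr 1
          exact (Nat.div_add_mod b a).symm
        rw [hb']
        have he' : p ^ (a * (b / a)) - 1 = (p ^ a - 1) * e := he
        linear_combination p ^ (b % a) * he'
      rw [key, int_gcd_add_mul, gcd_comm, ih (b % a) (Nat.mod_lt b ha) a, ← Nat.gcd_rec]

private lemma lcm_closed (p : ℤ) (hp : 2 ≤ p) :
    ∀ S : Finset ℕ, 0 ∉ S → (∀ j ∈ S, ∀ d, d ∣ j → d ∈ S) →
      S.lcm (fun j => p ^ j - 1) = ∏ d ∈ S, (cyclotomic d ℤ).eval p := by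
  have hp1 : (1 : ℤ) < p := by linarith
  intro S
  induction S using Finset.strongInduction with
  | _ S ih =>
    intro h0 hclosed
    rcases S.eq_empty_or_nonempty with rfl | hne
    · simp
    · set m := S.max' hne with hm
      have hmS : m ∈ S := S.max'_mem hne
      have hm0 : m ≠ 0 := fun h => h0 (h ▸ hmS)
      set S' := S.erase m with hS'
      have hSS : S = insert m S' := (Finset.insert_erase hmS).symm
      have hsub : S' ⊂ S := Finset.erase_ssubset hmS
      have hnotm : ∀ j ∈ S', ¬ m ∣ j := by
        intro j hj hdvd
        rcases Finset.mem_erase.1 hj with ⟨hjm, hjS⟩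
        have hj0 : j ≠ 0 := fun h => h0 (h ▸ hjS)
        have : m ≤ j := Nat.le_of_dvd (Nat.pos_of_ne_zero hj0) hdvd
        have : j ≤ m := S.le_max' j hjS
        omega
      have hS'closed : ∀ j ∈ S', ∀ d, d ∣ j → d ∈ S' := by
        intro j hj d hd
        rcases Finset.mem_erase.1 hj with ⟨hjm, hjS⟩
        refine Finset.mem_erase.2 ⟨?_, hclosed j hjS d hd⟩
        rintro rfl
        exact hnotm j hj hd
      have hpd : m.properDivisors ⊆ S' := by
        intro d hd
        rw [Nat.mem_properDivisors] at hd
        exact Finset.mem_erase.2 ⟨Nat.ne_of_lt hd.2, hclosed m hmS d hd.1⟩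
      have hS'0 : 0 ∉ S' := fun h => h0 (Finset.erase_subset m S h)
      have hL' : S'.lcm (fun j => p ^ j - 1) = ∏ d ∈ S', (cyclotomic d ℤ).eval p :=
        ih S' hsub hS'0 hS'closed
      have hPD : (m.properDivisors).lcm (fun j => p ^ j - 1)
          = ∏ d ∈ m.properDivisors, (cyclotomic d ℤ).eval p := by
        refine ih m.properDivisors (lt_of_le_of_lt hpd hsub) ?_ ?_
        · simp [Nat.properDivisors]
        · intro j hj d hd
          rw [Nat.mem_properDivisors] at hj ⊢
          exact ⟨hd.trans hj.1, lt_of_le_of_lt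
            (Nat.le_of_dvd (Nat.pos_of_ne_zero (by rintro rfl; simp at hj; omega)) hd) hj.2⟩
      have hgcd : GCDMonoid.gcd (S'.lcm fun j => p ^ j - 1) (p ^ m - 1)
          = (m.properDivisors).lcm (fun j => p ^ j - 1) := by
        rw [finset_gcd_lcm_distrib]
        refine Int.dvd_antisymm (int_finset_lcm_nonneg _ _) (int_finset_lcm_nonneg _ _) ?_ ?_
        · apply Finset.lcm_dvd
          intro j hj
          rw [int_gcd_pow_sub_one p hp]
          apply Finset.dvd_lcm
          rw [Nat.mem_properDivisors]
          refine ⟨Nat.gcd_dvd_right j m, ?_⟩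
          have h1 : Nat.gcd j m ∣ m := Nat.gcd_dvd_right j m
          have h2 : Nat.gcd j m ≠ m := by
            intro h
            exact hnotm j hj (h ▸ Nat.gcd_dvd_left j m)
          exact lt_of_le_of_ne (Nat.le_of_dvd (Nat.pos_of_ne_zero hm0) h1) h2
        · apply Finset.lcm_dvd
          intro d hd
          have hdm : d ∣ m := (Nat.mem_properDivisors.1 hd).1
          have : GCDMonoid.gcd (p ^ d - 1) (p ^ m - 1) ∣
              S'.lcm fun j => GCDMonoid.gcd (p ^ j - 1) (p ^ m - 1) :=
            Finset.dvd_lcm (hpd hd)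
          rwa [int_gcd_pow_sub_one p hp, Nat.gcd_eq_left hdm] at this
      have hPmul : (cyclotomic m ℤ).eval p
          * ∏ d ∈ m.properDivisors, (cyclotomic d ℤ).eval p = p ^ m - 1 := by
        have h1 := prod_cyclotomic_eq_X_pow_sub_one (Nat.pos_of_ne_zero hm0) ℤ
        rw [← Nat.insert_self_properDivisors hm0,
          Finset.prod_insert Nat.self_notMem_properDivisors] at h1
        have := congrArg (eval p) h1
        simpa [eval_prod] using this
      have hPpos : 0 < ∏ d ∈ m.properDivisors, (cyclotomic d ℤ).eval p :=
        Finset.prod_pos fun d _ => cyclotomic_pos' d hp1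
      rw [hSS, Finset.lcm_insert, Finset.prod_insert (Finset.notMem_erase m S)]
      -- gcd * lcm identity
      have hmain : GCDMonoid.gcd (S'.lcm fun j => p ^ j - 1) (p ^ m - 1)
            * GCDMonoid.lcm (S'.lcm fun j => p ^ j - 1) (p ^ m - 1)
          = (S'.lcm fun j => p ^ j - 1) * (p ^ m - 1) := by
        rw [← Int.coe_gcd, ← Int.coe_lcm, ← Int.natCast_mul, Int.gcd_mul_lcm]
        have h1 : (0:ℤ) ≤ S'.lcm fun j => p ^ j - 1 := int_finset_lcm_nonneg _ _
        have h2 : (0:ℤ) ≤ p ^ m - 1 := by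
          have : (1 : ℤ) ≤ p ^ m := one_le_pow₀ (by linarith)
          linarith
        rw [Int.natCast_mul, Int.natAbs_of_nonneg h1, Int.natAbs_of_nonneg h2]
      rw [hgcd, hPD] at hmain
      have hgoal : (∏ d ∈ m.properDivisors, (cyclotomic d ℤ).eval p)
            * GCDMonoid.lcm (p ^ m - 1) (S'.lcm fun j => p ^ j - 1)
          = (∏ d ∈ m.properDivisors, (cyclotomic d ℤ).eval p)
            * ((cyclotomic m ℤ).eval p * ∏ d ∈ S', (cyclotomic d ℤ).eval p) := by
        rw [lcm_comm, hmain, ← hPmul, hL']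
        ring
      exact mul_left_cancel₀ (ne_of_gt hPpos) hgoal

theorem lcm_eq_cyclotomic_product (p : ℤ) (hp : 2 ≤ p) (n : ℕ) :
    (Finset.Icc 1 n).lcm (fun j => p ^ j - 1) =
      ∏ d ∈ Finset.Icc 1 n, (Polynomial.cyclotomic d ℤ).eval p := by
  apply lcm_closed p hp
  · simp
  · intro j hj d hd
    rw [Finset.mem_Icc] at hj ⊢
    have hj0 : 0 < j := hj.1
    exact ⟨Nat.pos_of_dvd_of_pos hd hj0, le_trans (Nat.le_of_dvd hj0 hd) hj.2⟩
end

section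
/- For 0 < q ≤ 1/2, natural number n ≥ 1, and x ∈ [0,1], the function x ↦ (qx;q)_n · x^n attains its maximum on [0,1] at x = 1; equivalently, (qx;q)_n x^n ≤ (q;q)_n for all x ∈ [0,1]. -/
theorem qpoch_max_at_one (q : ℝ) (hq : 0 < q) (hq2 : q ≤ 1 / 2) (n : ℕ) (hn : 1 ≤ n)
    (x : ℝ) (hx : x ∈ Set.Icc (0 : ℝ) 1) :
    (∏ j ∈ Finset.range n, (1 - x * q ^ (j + 1))) * x ^ n ≤
      ∏ j ∈ Finset.range n, (1 - q ^ (j + 1)) := by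
  obtain ⟨hx0, hx1⟩ := hx
  have hq1 : q ≤ 1 := by linarith
  have key : (∏ j ∈ Finset.range n, (x * (1 - x * q ^ (j + 1)))) ≤
      ∏ j ∈ Finset.range n, (1 - q ^ (j + 1)) := by
    apply Finset.prod_le_prod
    · intro j _
      have hqj : q ^ (j + 1) ≤ 1 := pow_le_one₀ hq.le hq1
      have : x * q ^ (j + 1) ≤ 1 := by nlinarith [pow_nonneg hq.le (j+1)]
      nlinarith
    · intro j _
      have hqj : q ^ (j + 1) ≤ q := by
        calc q ^ (j + 1) ≤ q ^ 1 := pow_le_pow_of_le_one hq.le hq1 (by omega)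
        _ = q := pow_one q
      have h2 : 0 ≤ 1 - q ^ (j + 1) * (1 + x) := by nlinarith
      nlinarith [mul_nonneg (sub_nonneg.2 hx1) h2]
  calc (∏ j ∈ Finset.range n, (1 - x * q ^ (j + 1))) * x ^ n
      = ∏ j ∈ Finset.range n, (x * (1 - x * q ^ (j + 1))) := by
        rw [Finset.prod_mul_distrib, Finset.prod_const, mul_comm, Finset.card_range]
    _ ≤ _ := key
end

section
/- For 0 < q < 1, p = 1/q, natural number n and integer ℓ ≥ 0, the n-th q-derivative of the function x ↦ 1/(p^n − q^{ℓ+1} x) is given by D_q^n (1/(p^n − q^{ℓ+1} x)) = q^{ℓn} (q;q)_n p^{n(n-1)/2} / ((1−q)^n ∏_{j=0}^n (p^{n+j} − x q^{ℓ+1})). -/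
/-- The q-derivative operator: `D_q f(x) = (f(x) - f(qx))/(x(1-q))` for `x ≠ 0`,
extended by `f'(0)` at `0`. -/
noncomputable def qDerivOp (q : ℝ) (f : ℝ → ℝ) : ℝ → ℝ :=
  fun x => if x = 0 then deriv f 0 else (f x - f (q * x)) / (x * (1 - q))

lemma qDeriv_aux (q : ℝ) (hq : 0 < q) (hq1 : q < 1) (a b : ℝ) :
    ∀ k : ℕ, ∀ x : ℝ, x ≠ 0 → (∀ j ≤ k, a - b * (q ^ j * x) ≠ 0) →
    (qDerivOp q)^[k] (fun y => 1 / (a - b * y)) x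
      = b ^ k * (∏ i ∈ Finset.Icc 1 k, (1 - q ^ i)) /
        ((1 - q) ^ k * ∏ j ∈ Finset.range (k + 1), (a - b * (q ^ j * x))) := by
  intro k
  induction k with
  | zero => intro x hx h; simp
  | succ k ih =>
    intro x hx h
    have hq0 : q ≠ 0 := ne_of_gt hq
    have hq1' : (1:ℝ) - q ≠ 0 := by linarith
    have hxq : q * x ≠ 0 := mul_ne_zero hq0 hx
    have h1 : ∀ j ≤ k, a - b * (q ^ j * x) ≠ 0 := fun j hj => h j (le_trans hj (Nat.le_succ k))
    have h2 : ∀ j ≤ k, a - b * (q ^ j * (q * x)) ≠ 0 := by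
      intro j hj
      have := h (j + 1) (Nat.succ_le_succ hj)
      rw [show q ^ (j+1) * x = q ^ j * (q * x) by ring] at this
      exact this
    rw [Function.iterate_succ_apply']
    simp only [qDerivOp, hx, if_neg, if_false]
    rw [ih x hx h1, ih (q * x) hxq h2]
    have e1 : ∏ j ∈ Finset.range (k + 1), (a - b * (q ^ j * (q * x)))
        = ∏ j ∈ Finset.range (k + 1), (a - b * (q ^ (j+1) * x)) := by
      apply Finset.prod_congr rfl; intro j _; ring_nf
    rw [e1]
    set M := ∏ j ∈ Finset.range k, (a - b * (q ^ (j+1) * x)) with hM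
    have hMne : M ≠ 0 := by
      apply Finset.prod_ne_zero_iff.2
      intro j hj
      have hj' := Finset.mem_range.1 hj
      exact h (j+1) (by omega)
    have eP : ∏ j ∈ Finset.range (k + 1), (a - b * (q ^ j * x)) = (a - b * (q ^ 0 * x)) * M := by
      rw [Finset.prod_range_succ', mul_comm]
    have ePq : ∏ j ∈ Finset.range (k + 1), (a - b * (q ^ (j+1) * x))
        = M * (a - b * (q ^ (k+1) * x)) := by
      rw [Finset.prod_range_succ]
    have eP2 : ∏ j ∈ Finset.range (k + 2), (a - b * (q ^ j * x))
        = (a - b * (q ^ 0 * x)) * M * (a - b * (q ^ (k+1) * x)) := by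
      rw [Finset.prod_range_succ, eP]
    have eIcc : ∏ i ∈ Finset.Icc 1 (k+1), (1 - q ^ i)
        = (∏ i ∈ Finset.Icc 1 k, (1 - q ^ i)) * (1 - q ^ (k+1)) := by
      exact Finset.prod_Icc_succ_top (by omega) _
    rw [eP, ePq, eP2, eIcc]
    have h0 : a - b * (q ^ 0 * x) ≠ 0 := h 0 (Nat.zero_le _)
    have hk1 : a - b * (q ^ (k+1) * x) ≠ 0 := h (k+1) le_rfl
    have h0' : a - b * x ≠ 0 := by simpa using h0
    have hk1' : a - b * (q * q ^ k * x) ≠ 0 := by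
      rw [show q ^ (k+1) * x = q * q ^ k * x by ring] at hk1; exact hk1
    have hk1'' : a - b * x * q ^ (k+1) ≠ 0 := by
      rw [show b * x * q ^ (k+1) = b * (q ^ (k+1) * x) by ring]; exact hk1
    field_simp [h0', hk1', hk1'', hMne]
    ring

theorem qDeriv_iterate (q : ℝ) (hq : 0 < q) (hq1 : q < 1) (n ℓ : ℕ) (x : ℝ) (hx : x ≠ 0)
    (h : ∀ j ≤ n, (1 / q) ^ n - q ^ (ℓ + 1) * (q ^ j * x) ≠ 0) :
    (qDerivOp q)^[n] (fun y => 1 / ((1 / q) ^ n - q ^ (ℓ + 1) * y)) x =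
      q ^ (ℓ * n) * (∏ i ∈ Finset.Icc 1 n, (1 - q ^ i)) * (1 / q) ^ (n * (n - 1) / 2) /
        ((1 - q) ^ n * ∏ j ∈ Finset.range (n + 1), ((1 / q) ^ (n + j) - x * q ^ (ℓ + 1))) := by
  have hq0 : q ≠ 0 := ne_of_gt hq
  have hq1' : (1:ℝ) - q ≠ 0 := by linarith
  rw [qDeriv_aux q hq hq1 ((1/q)^n) (q^(ℓ+1)) n x hx h]
  set P := ∏ i ∈ Finset.Icc 1 n, ((1:ℝ) - q ^ i) with hPdef
  clear_value P
  have eterm : ∀ j ∈ Finset.range (n+1), ((1:ℝ)/q)^(n+j) - x * q^(ℓ+1)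
      = (1/q)^j * ((1/q)^n - q^(ℓ+1) * (q^j * x)) := by
    intro j _
    field_simp
    have hj : (1/q)^j * q^j = 1 := by rw [← mul_pow, one_div, inv_mul_cancel₀ hq0, one_pow]
    linear_combination (x * q^(ℓ+1)) * hj
  have eprod : ∏ j ∈ Finset.range (n+1), (((1:ℝ)/q)^(n+j) - x * q^(ℓ+1))
      = (1/q)^(n*(n-1)/2 + n) * ∏ j ∈ Finset.range (n+1), ((1/q)^n - q^(ℓ+1) * (q^j * x)) := by
    rw [Finset.prod_congr rfl eterm, Finset.prod_mul_distrib, Finset.prod_pow_eq_pow_sum]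
    congr 2
    rw [Finset.sum_range_succ, Finset.sum_range_id]
  rw [eprod]
  set Pr := ∏ j ∈ Finset.range (n+1), (((1:ℝ)/q)^n - q^(ℓ+1) * (q^j * x)) with hPrdef
  clear_value Pr
  have hPr : Pr ≠ 0 := by
    rw [hPrdef]
    apply Finset.prod_ne_zero_iff.2
    intro j hj
    exact h j (Nat.le_of_lt_succ (Finset.mem_range.1 hj))
  field_simp [hPr]
  simp only [pow_add]
  have hn : (1/q)^n * q^n = 1 := by rw [← mul_pow, one_div, inv_mul_cancel₀ hq0, one_pow]
  linear_combination (P * q^(ℓ*n) * (1/q)^(n*(n-1)/2)) * hn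
end
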